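/- Let a, b, d > 0 with d ≤ min(a,b) and define u(x) = a·x³ − b − d·(x² − 1)·√(x² + 1). Then u has a unique positive zero x₀; moreover if b < a then x₀ < (b/a)^{1/3}, if b > a then x₀ > (b/a)^{1/3}, and if a = b then x₀ = 1. -/
import Mathlib


open Real

/-- basic facts about `√(x²+1)` -/
private lemma sqS (x : ℝ) : Real.sqrt (x ^ 2 + 1) ^ 2 = x ^ 2 + 1 :=
  Real.sq_sqrt (by positivity)

private lemma S_pos (x : ℝ) : 0 < Real.sqrt (x ^ 2 + 1) :=
  Real.sqrt_pos.2 (by positivity)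

private lemma S_gt {x : ℝ} (hx : 0 ≤ x) : x < Real.sqrt (x ^ 2 + 1) := by
  have h2 := sqS x
  have h0 := S_pos x
  nlinarith [h2, h0]

private lemma S_upper {x : ℝ} (hx : 0 ≤ x) :
    2 * x * Real.sqrt (x ^ 2 + 1) ≤ 2 * x ^ 2 + 1 := by
  have h2 := sqS x
  have h0 := S_pos x
  nlinarith [sq_nonneg (2 * x * Real.sqrt (x ^ 2 + 1) - (2 * x ^ 2 + 1)),
    sq_nonneg (Real.sqrt (x ^ 2 + 1) - x)]

/-- for `0 ≤ x ≤ 1` : `(1-x²)√(x²+1) ≤ 1-x³` -/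
private lemma le_one_ineq {x : ℝ} (h0 : 0 ≤ x) (h1 : x ≤ 1) :
    (1 - x ^ 2) * Real.sqrt (x ^ 2 + 1) ≤ 1 - x ^ 3 := by
  have h2 := sqS x
  have hp := S_pos x
  have hA : 0 ≤ (1 - x ^ 2) * Real.sqrt (x ^ 2 + 1) := by
    apply mul_nonneg (by nlinarith) hp.le
  have hB : (0:ℝ) ≤ 1 - x ^ 3 := by nlinarith
  have hsq : ((1 - x ^ 2) * Real.sqrt (x ^ 2 + 1)) ^ 2 ≤ (1 - x ^ 3) ^ 2 := by
    have : ((1 - x ^ 2) * Real.sqrt (x ^ 2 + 1)) ^ 2 = (1 - x ^ 2) ^ 2 * (x ^ 2 + 1) := by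
      rw [mul_pow, h2]
    rw [this]
    nlinarith [sq_nonneg (x * (1 - x))]
  exact le_of_pow_le_pow_left₀ two_ne_zero hB hsq

private lemma le_one_ineq_strict {x : ℝ} (h0 : 0 < x) (h1 : x < 1) :
    (1 - x ^ 2) * Real.sqrt (x ^ 2 + 1) < 1 - x ^ 3 := by
  have h2 := sqS x
  have hp := S_pos x
  have hA : 0 ≤ (1 - x ^ 2) * Real.sqrt (x ^ 2 + 1) := by
    apply mul_nonneg (by nlinarith) hp.le
  have hsq : ((1 - x ^ 2) * Real.sqrt (x ^ 2 + 1)) ^ 2 < (1 - x ^ 3) ^ 2 := by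
    have : ((1 - x ^ 2) * Real.sqrt (x ^ 2 + 1)) ^ 2 = (1 - x ^ 2) ^ 2 * (x ^ 2 + 1) := by
      rw [mul_pow, h2]
    rw [this]
    nlinarith [sq_nonneg (x * (1 - x)), mul_pos h0 (sub_pos.2 h1)]
  exact lt_of_pow_lt_pow_left₀ 2 (by nlinarith) hsq

/-- for `1 ≤ x` : `(x²-1)√(x²+1) ≤ x³-1` -/
private lemma ge_one_ineq {x : ℝ} (h1 : 1 ≤ x) :
    (x ^ 2 - 1) * Real.sqrt (x ^ 2 + 1) ≤ x ^ 3 - 1 := by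
  have h2 := sqS x
  have hp := S_pos x
  have hA : 0 ≤ (x ^ 2 - 1) * Real.sqrt (x ^ 2 + 1) := by
    apply mul_nonneg (by nlinarith) hp.le
  have hB : (0:ℝ) ≤ x ^ 3 - 1 := by nlinarith
  have hsq : ((x ^ 2 - 1) * Real.sqrt (x ^ 2 + 1)) ^ 2 ≤ (x ^ 3 - 1) ^ 2 := by
    have : ((x ^ 2 - 1) * Real.sqrt (x ^ 2 + 1)) ^ 2 = (x ^ 2 - 1) ^ 2 * (x ^ 2 + 1) := by
      rw [mul_pow, h2]
    rw [this]
    nlinarith [sq_nonneg (x * (x - 1))]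
  exact le_of_pow_le_pow_left₀ two_ne_zero hB hsq

private lemma ge_one_ineq_strict {x : ℝ} (h1 : 1 < x) :
    (x ^ 2 - 1) * Real.sqrt (x ^ 2 + 1) < x ^ 3 - 1 := by
  have h2 := sqS x
  have hp := S_pos x
  have hA : 0 ≤ (x ^ 2 - 1) * Real.sqrt (x ^ 2 + 1) := by
    apply mul_nonneg (by nlinarith) hp.le
  have hsq : ((x ^ 2 - 1) * Real.sqrt (x ^ 2 + 1)) ^ 2 < (x ^ 3 - 1) ^ 2 := by
    have : ((x ^ 2 - 1) * Real.sqrt (x ^ 2 + 1)) ^ 2 = (x ^ 2 - 1) ^ 2 * (x ^ 2 + 1) := by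
      rw [mul_pow, h2]
    rw [this]
    nlinarith [sq_nonneg (x * (x - 1)), mul_pos (by linarith : (0:ℝ) < x) (sub_pos.2 h1)]
  exact lt_of_pow_lt_pow_left₀ 2 (by nlinarith) hsq

/-- key two-point inequality : `1 ≤ x < y ⇒ (y²-1)√(y²+1) - (x²-1)√(x²+1) < y³ - x³` -/
private lemma key_K {x y : ℝ} (hx : 1 ≤ x) (hxy : x < y) :
    (y ^ 2 - 1) * Real.sqrt (y ^ 2 + 1) - (x ^ 2 - 1) * Real.sqrt (x ^ 2 + 1)
      < y ^ 3 - x ^ 3 := by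
  set p := Real.sqrt (x ^ 2 + 1) with hpdef
  set q := Real.sqrt (y ^ 2 + 1) with hqdef
  have hp2 : p ^ 2 = x ^ 2 + 1 := sqS x
  have hq2 : q ^ 2 = y ^ 2 + 1 := sqS y
  have hpx : x < p := S_gt (by linarith)
  have hqy : y < q := S_gt (by linarith)
  have hy1 : 1 < y := lt_of_le_of_lt hx hxy
  -- G := (x²+xy+y²)(p+q) - (x+y)(x²+y²+pq)
  have hG' : 0 < x ^ 2 * (q + y) + y ^ 2 * (p + x) - (x + y) := by
    nlinarith [mul_pos (mul_pos (by nlinarith : (0:ℝ) < x ^ 2) (by linarith : (0:ℝ) < q + y)) (by nlinarith : (0:ℝ) < 1)]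
  have hid2 : ((x ^ 2 + x * y + y ^ 2) * (p + q) - (x + y) * (x ^ 2 + y ^ 2 + p * q))
      * ((p + x) * (q + y))
      = x ^ 2 * (q + y) + y ^ 2 * (p + x) - (x + y) := by
    linear_combination (y ^ 3 + x * y ^ 2 + x ^ 2 * y + q * x ^ 2 - q ^ 2 * y - q ^ 2 * x) * hp2
      + (-y - x + x * y ^ 2 + p * y ^ 2) * hq2
  have hD : 0 < (p + x) * (q + y) := by positivity
  have hG : 0 < (x ^ 2 + x * y + y ^ 2) * (p + q) - (x + y) * (x ^ 2 + y ^ 2 + p * q) := by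
    by_contra h
    push_neg at h
    nlinarith [mul_nonpos_of_nonpos_of_nonneg h hD.le]
  have hid1 : (y ^ 3 - x ^ 3 - ((y ^ 2 - 1) * q - (x ^ 2 - 1) * p)) * (p + q)
      = (y - x) * ((x ^ 2 + x * y + y ^ 2) * (p + q) - (x + y) * (x ^ 2 + y ^ 2 + p * q)) := by
    linear_combination (x ^ 2 - 1) * hp2 + (1 - y ^ 2) * hq2
  have hpq : 0 < p + q := by positivity
  have hK : 0 < y ^ 3 - x ^ 3 - ((y ^ 2 - 1) * q - (x ^ 2 - 1) * p) := by
    by_contra h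
    push_neg at h
    nlinarith [mul_nonpos_of_nonpos_of_nonneg h hpq.le, mul_pos (by linarith : (0:ℝ) < y - x) hG]
  linarith

/-- strict monotonicity on `[1,∞)` of `x ↦ a x³ - b - d(x²-1)√(x²+1)` (given `0 < d ≤ a`) -/
private lemma mono_U {a b d x y : ℝ} (hd0 : 0 < d) (hda : d ≤ a)
    (hx : 1 ≤ x) (hxy : x < y) :
    a * x ^ 3 - b - d * (x ^ 2 - 1) * Real.sqrt (x ^ 2 + 1)
      < a * y ^ 3 - b - d * (y ^ 2 - 1) * Real.sqrt (y ^ 2 + 1) := by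
  have hK := key_K hx hxy
  have hcube : x ^ 3 < y ^ 3 := by
    nlinarith [mul_pos (sub_pos.2 hxy) (show (0:ℝ) < x ^ 2 + x * y + y ^ 2 by nlinarith)]
  set B := (y ^ 2 - 1) * Real.sqrt (y ^ 2 + 1) - (x ^ 2 - 1) * Real.sqrt (x ^ 2 + 1) with hB
  rcases le_or_gt B 0 with h | h
  · nlinarith
  · nlinarith

/-- the inversion identity -/
private lemma inv_identity (a b d : ℝ) {x : ℝ} (hx : 0 < x) :
    a * (x⁻¹) ^ 3 - b - d * ((x⁻¹) ^ 2 - 1) * Real.sqrt ((x⁻¹) ^ 2 + 1)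
      = -(b * x ^ 3 - a - d * (x ^ 2 - 1) * Real.sqrt (x ^ 2 + 1)) / x ^ 3 := by
  have hs : Real.sqrt ((x⁻¹) ^ 2 + 1) = Real.sqrt (x ^ 2 + 1) / x := by
    rw [(by field_simp; ring : (x⁻¹) ^ 2 + 1 = (x ^ 2 + 1) / x ^ 2),
      Real.sqrt_div (by positivity), Real.sqrt_sq hx.le]
  rw [hs]
  field_simp
  ring

/-- the main lemma for the case `a < b` -/
private lemma main_lt (a b d : ℝ) (ha : 0 < a) (hd0 : 0 < d) (hda : d ≤ a) (hab : a < b) :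
    (∃! x : ℝ, 0 < x ∧
        a * x ^ 3 - b - d * (x ^ 2 - 1) * Real.sqrt (x ^ 2 + 1) = 0) ∧
    ∀ x₀ : ℝ, 0 < x₀ →
      a * x₀ ^ 3 - b - d * (x₀ ^ 2 - 1) * Real.sqrt (x₀ ^ 2 + 1) = 0 →
        (b / a) ^ ((1 : ℝ) / 3) < x₀ := by
  have hb : 0 < b := lt_trans ha hab
  -- negative on (0,1]
  have hneg : ∀ x : ℝ, 0 < x → x ≤ 1 →
      a * x ^ 3 - b - d * (x ^ 2 - 1) * Real.sqrt (x ^ 2 + 1) < 0 := by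
    intro x hx0 hx1
    have h5 := le_one_ineq hx0.le hx1
    have hp := S_pos x
    have h6 : d * ((1 - x ^ 2) * Real.sqrt (x ^ 2 + 1)) ≤ d * (1 - x ^ 3) :=
      mul_le_mul_of_nonneg_left h5 hd0.le
    have h7 : d * (1 - x ^ 3) ≤ a * (1 - x ^ 3) :=
      mul_le_mul_of_nonneg_right hda (by nlinarith)
    nlinarith
  -- positive at large points
  have hpos : ∀ X : ℝ, 1 ≤ X → 2 * b ≤ a * X →
      0 < a * X ^ 3 - b - d * (X ^ 2 - 1) * Real.sqrt (X ^ 2 + 1) := by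
    intro X hX1 hbX
    have hp2 := sqS X
    have hp0 := S_pos X
    have h4 := S_upper (by linarith : (0:ℝ) ≤ X)
    have hsq : 0 ≤ (X ^ 2 - 1) * Real.sqrt (X ^ 2 + 1) :=
      mul_nonneg (by nlinarith) hp0.le
    have h5 : d * ((X ^ 2 - 1) * Real.sqrt (X ^ 2 + 1))
        ≤ a * ((X ^ 2 - 1) * Real.sqrt (X ^ 2 + 1)) :=
      mul_le_mul_of_nonneg_right hda hsq
    have h6 : a * ((X ^ 2 - 1) * (2 * X * Real.sqrt (X ^ 2 + 1)))
        ≤ a * ((X ^ 2 - 1) * (2 * X ^ 2 + 1)) := by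
      apply mul_le_mul_of_nonneg_left _ ha.le
      exact mul_le_mul_of_nonneg_left h4 (by nlinarith)
    nlinarith
  -- any zero is > 1
  have hgt1 : ∀ x : ℝ, 0 < x →
      a * x ^ 3 - b - d * (x ^ 2 - 1) * Real.sqrt (x ^ 2 + 1) = 0 → 1 < x := by
    intro x hx0 hxz
    by_contra h
    push_neg at h
    exact absurd hxz (ne_of_lt (hneg x hx0 h))
  -- continuity
  have hcont : Continuous fun x : ℝ =>
      a * x ^ 3 - b - d * (x ^ 2 - 1) * Real.sqrt (x ^ 2 + 1) := by
    apply Continuous.sub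
    · exact (continuous_const.mul (continuous_pow 3)).sub continuous_const
    · exact (continuous_const.mul ((continuous_pow 2).sub continuous_const)).mul
        (Real.continuous_sqrt.comp ((continuous_pow 2).add continuous_const))
  -- existence via IVT
  set X : ℝ := 2 * b / a + 2 with hX
  have hX1 : (1:ℝ) ≤ X := by
    have : 0 < 2 * b / a := by positivity
    simp only [hX]; linarith
  have hXb : 2 * b ≤ a * X := by
    simp only [hX]
    rw [mul_add, mul_div_cancel₀ _ (ne_of_gt ha)]
    nlinarith
  have hf1 : a * (1:ℝ) ^ 3 - b - d * ((1:ℝ) ^ 2 - 1) * Real.sqrt ((1:ℝ) ^ 2 + 1) < 0 :=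
    hneg 1 one_pos le_rfl
  have hfX : 0 < a * X ^ 3 - b - d * (X ^ 2 - 1) * Real.sqrt (X ^ 2 + 1) := hpos X hX1 hXb
  obtain ⟨x₀, hx₀mem, hx₀⟩ : ∃ x₀ ∈ Set.Icc (1:ℝ) X,
      a * x₀ ^ 3 - b - d * (x₀ ^ 2 - 1) * Real.sqrt (x₀ ^ 2 + 1) = 0 := by
    have hIVT := intermediate_value_Icc hX1 hcont.continuousOn
    have h0 : (0:ℝ) ∈ Set.Icc
        (a * (1:ℝ) ^ 3 - b - d * ((1:ℝ) ^ 2 - 1) * Real.sqrt ((1:ℝ) ^ 2 + 1))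
        (a * X ^ 3 - b - d * (X ^ 2 - 1) * Real.sqrt (X ^ 2 + 1)) := ⟨hf1.le, hfX.le⟩
    obtain ⟨x₀, hmem, hval⟩ := hIVT h0
    exact ⟨x₀, hmem, hval⟩
  have hx₀pos : 0 < x₀ := lt_of_lt_of_le one_pos hx₀mem.1
  -- uniqueness
  have huniq : ∀ x y : ℝ, 0 < x →
      a * x ^ 3 - b - d * (x ^ 2 - 1) * Real.sqrt (x ^ 2 + 1) = 0 → 0 < y →
      a * y ^ 3 - b - d * (y ^ 2 - 1) * Real.sqrt (y ^ 2 + 1) = 0 → x = y := by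
    intro x y hx0 hxz hy0 hyz
    have hx1 := hgt1 x hx0 hxz
    have hy1 := hgt1 y hy0 hyz
    rcases lt_trichotomy x y with h | h | h
    · exfalso
      have := mono_U (a := a) (b := b) (d := d) hd0 hda hx1.le h
      rw [hxz, hyz] at this
      exact lt_irrefl 0 this
    · exact h
    · exfalso
      have := mono_U (a := a) (b := b) (d := d) hd0 hda hy1.le h
      rw [hxz, hyz] at this
      exact lt_irrefl 0 this
  constructor
  · exact ⟨x₀, ⟨hx₀pos, hx₀⟩, fun y hy => huniq y x₀ hy.1 hy.2 hx₀pos hx₀⟩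
  · intro z hz0 hzz
    set c : ℝ := (b / a) ^ ((1:ℝ) / 3) with hc
    have hba : 1 < b / a := (one_lt_div ha).2 hab
    have hc1 : 1 < c := by
      rw [hc]
      exact Real.one_lt_rpow_iff_of_pos (by positivity) |>.2 (Or.inl ⟨hba, by norm_num⟩)
    have hc3 : c ^ (3:ℕ) = b / a := by
      rw [hc, ← Real.rpow_natCast ((b / a) ^ ((1:ℝ) / 3)) 3, ← Real.rpow_mul (by positivity)]
      norm_num
    have hacb : a * c ^ 3 = b := by
      rw [hc3]
      field_simp
    have hfc : a * c ^ 3 - b - d * (c ^ 2 - 1) * Real.sqrt (c ^ 2 + 1) < 0 := by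
      have hs := S_pos c
      have h1 : 0 < (c ^ 2 - 1) * Real.sqrt (c ^ 2 + 1) :=
        mul_pos (by nlinarith) hs
      nlinarith [mul_pos hd0 h1]
    have hz1 : 1 < z := hgt1 z hz0 hzz
    rcases lt_trichotomy c z with h | h | h
    · exact h
    · exfalso; rw [← h] at hzz; rw [hzz] at hfc; exact lt_irrefl 0 hfc
    · exfalso
      have := mono_U (a := a) (b := b) (d := d) hd0 hda hz1.le h
      rw [hzz] at this
      linarith

/-- the case `a = b` : the unique positive zero is `1` -/
private lemma main_eq (a d : ℝ) (ha : 0 < a) (hd0 : 0 < d) (hda : d ≤ a) :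
    ∀ x : ℝ, 0 < x →
      (a * x ^ 3 - a - d * (x ^ 2 - 1) * Real.sqrt (x ^ 2 + 1) = 0 ↔ x = 1) := by
  intro x hx0
  constructor
  · intro hz
    by_contra hne
    rcases lt_or_gt_of_ne hne with h | h
    · -- x < 1 : value is negative
      have h5 := le_one_ineq_strict hx0 h
      have hp := S_pos x
      have hnn : 0 ≤ (1 - x ^ 2) * Real.sqrt (x ^ 2 + 1) :=
        mul_nonneg (by nlinarith) hp.le
      have h6 : d * ((1 - x ^ 2) * Real.sqrt (x ^ 2 + 1)) ≤ a * ((1 - x ^ 2) * Real.sqrt (x ^ 2 + 1)) :=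
        mul_le_mul_of_nonneg_right hda hnn
      have h7 : a * ((1 - x ^ 2) * Real.sqrt (x ^ 2 + 1)) < a * (1 - x ^ 3) :=
        (mul_lt_mul_iff_right₀ ha).2 h5
      nlinarith
    · -- x > 1 : value is positive
      have h5 := ge_one_ineq_strict h
      have hp := S_pos x
      have hnn : 0 ≤ (x ^ 2 - 1) * Real.sqrt (x ^ 2 + 1) :=
        mul_nonneg (by nlinarith) hp.le
      have h6 : d * ((x ^ 2 - 1) * Real.sqrt (x ^ 2 + 1)) ≤ a * ((x ^ 2 - 1) * Real.sqrt (x ^ 2 + 1)) :=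
        mul_le_mul_of_nonneg_right hda hnn
      have h7 : a * ((x ^ 2 - 1) * Real.sqrt (x ^ 2 + 1)) < a * (x ^ 3 - 1) :=
        (mul_lt_mul_iff_right₀ ha).2 h5
      nlinarith
  · intro h
    subst h
    norm_num

theorem stmt17 (a b d : ℝ) (ha : 0 < a) (hb : 0 < b) (hd0 : 0 < d) (hd : d ≤ min a b) :
    (∃! x : ℝ, 0 < x ∧
        a * x ^ 3 - b - d * (x ^ 2 - 1) * Real.sqrt (x ^ 2 + 1) = 0) ∧
    ∀ x₀ : ℝ, 0 < x₀ →
      a * x₀ ^ 3 - b - d * (x₀ ^ 2 - 1) * Real.sqrt (x₀ ^ 2 + 1) = 0 →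
        (b < a → x₀ < (b / a) ^ ((1 : ℝ) / 3)) ∧
        (a < b → (b / a) ^ ((1 : ℝ) / 3) < x₀) ∧
        (a = b → x₀ = 1) := by
  have hda : d ≤ a := le_trans hd (min_le_left a b)
  have hdb : d ≤ b := le_trans hd (min_le_right a b)
  rcases lt_trichotomy a b with hab | hab | hab
  · -- case a < b
    obtain ⟨hEU, hcomp⟩ := main_lt a b d ha hd0 hda hab
    refine ⟨hEU, fun x₀ hx₀ hz => ⟨fun h => absurd h (not_lt.2 hab.le), fun _ => hcomp x₀ hx₀ hz, fun h => absurd h (ne_of_lt hab)⟩⟩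
  · -- case a = b
    subst hab
    have hmain := main_eq a d ha hd0 hda
    constructor
    · refine ⟨1, ⟨one_pos, (hmain 1 one_pos).2 rfl⟩, fun y hy => (hmain y hy.1).1 hy.2⟩
    · intro x₀ hx₀ hz
      exact ⟨fun h => absurd h (lt_irrefl a), fun h => absurd h (lt_irrefl a),
        fun _ => (hmain x₀ hx₀).1 hz⟩
  · -- case b < a : use the inversion x ↦ x⁻¹
    obtain ⟨⟨y, ⟨hy0, hyz⟩, hyuniq⟩, hcomp⟩ := main_lt b a d hb hd0 hdb hab
    -- correspondence of zeros
    have hcorr : ∀ x : ℝ, 0 < x →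
        (a * x ^ 3 - b - d * (x ^ 2 - 1) * Real.sqrt (x ^ 2 + 1) = 0 ↔
         b * (x⁻¹) ^ 3 - a - d * ((x⁻¹) ^ 2 - 1) * Real.sqrt ((x⁻¹) ^ 2 + 1) = 0) := by
      intro x hx0
      have hx0' : 0 < x⁻¹ := inv_pos.2 hx0
      have hid := inv_identity b a d hx0
      constructor
      · intro h; rw [hid, h]; simp
      · intro h
        rw [hid] at h
        have hx3 : (0:ℝ) < x ^ 3 := by positivity
        field_simp at h
        linarith
    have hy1 : 1 < y := by
      have := hcomp y hy0 hyz
      have h1 : (1:ℝ) < (a / b) ^ ((1:ℝ)/3) :=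
        Real.one_lt_rpow_iff_of_pos (by positivity) |>.2 (Or.inl ⟨(one_lt_div hb).2 hab, by norm_num⟩)
      linarith
    have hyi0 : 0 < y⁻¹ := inv_pos.2 hy0
    have hyiz : a * (y⁻¹) ^ 3 - b - d * ((y⁻¹) ^ 2 - 1) * Real.sqrt ((y⁻¹) ^ 2 + 1) = 0 := by
      rw [hcorr y⁻¹ hyi0]
      simpa [inv_inv] using hyz
    constructor
    · refine ⟨y⁻¹, ⟨hyi0, hyiz⟩, ?_⟩
      intro z hz
      have hz0 := hz.1
      have hzi : b * (z⁻¹) ^ 3 - a - d * ((z⁻¹) ^ 2 - 1) * Real.sqrt ((z⁻¹) ^ 2 + 1) = 0 :=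
        (hcorr z hz0).1 hz.2
      have : z⁻¹ = y := hyuniq z⁻¹ ⟨inv_pos.2 hz0, hzi⟩
      rw [← this, inv_inv]
    · intro x₀ hx₀ hz
      refine ⟨fun _ => ?_, fun h => absurd h (not_lt.2 hab.le), fun h => absurd h.symm (ne_of_lt hab)⟩
      have hzi : b * (x₀⁻¹) ^ 3 - a - d * ((x₀⁻¹) ^ 2 - 1) * Real.sqrt ((x₀⁻¹) ^ 2 + 1) = 0 :=
        (hcorr x₀ hx₀).1 hz
      have hgt := hcomp x₀⁻¹ (inv_pos.2 hx₀) hzi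
      have hcpos : (0:ℝ) < (a / b) ^ ((1:ℝ)/3) := Real.rpow_pos_of_pos (by positivity) _
      have hkey : (b / a) ^ ((1:ℝ)/3) = ((a / b) ^ ((1:ℝ)/3))⁻¹ := by
        rw [← Real.inv_rpow (by positivity : (0:ℝ) ≤ a / b)]
        congr 1
        field_simp
      rw [hkey]
      have := inv_strictAnti₀ hcpos hgt
      rwa [inv_inv] at this
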